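/- Let Gal be a profinite group with H^2(Gal, μ) = 0 for a finite abelian group μ (with trivial action), let G be a finite quotient of Gal, and let λ ∈ H^2(G, μ) be a class with trivial G-action on μ, corresponding to a central extension 0 → μ → G' → G → 0. Then there exists a finite group H and surjections Gal ↠ H ↠ G such that the kernel K of H ↠ G is a central cyclic subgroup of H isomorphic to a subgroup of μ, and the pullback of λ to H^2(H, μ) vanishes. -/

import Mathlib

/-!
Statement 3 (group-theoretic core of Lemma 3.7).  Let `Gal` be a profinite group
such that `H²(Gal, μ) = 0` for a finite cyclic group `μ` with trivial action
(encoded: every central extension of `Gal` by `μ` splits).  Let `G` be a finite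
quotient of `Gal` and `λ ∈ H²(G, μ)` a class corresponding to a central extension
`0 → μ → G' → G → 0`.  Then there are a finite group `H` (realized as a subgroup of
`G'`) and surjections `Gal ↠ H ↠ G` compatible with `Gal ↠ G`, such that the kernel
of `H ↠ G` is central and cyclic, isomorphic to a subgroup of `μ`, and the pullback
of `λ` to `H²(H, μ)` vanishes (witnessed by a lift `H →* G'` over `G`).
-/
theorem central_extension_trivialized_on_controlled_quotient
    {Gal μ G G' : Type} [Group Gal]
    [TopologicalSpace Gal] [IsTopologicalGroup Gal] [CompactSpace Gal]
    [TotallyDisconnectedSpace Gal]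
    [CommGroup μ] [Finite μ] [IsCyclic μ]
    [Group G] [Finite G] [Group G']
    (hH2 : ∀ (E : Type) [Group E] (j : μ →* E) (q : E →* Gal),
        Function.Injective j → Function.Surjective q →
        (∀ m : μ, j m ∈ Subgroup.center E) → j.range = q.ker →
        ∃ s : Gal →* E, q.comp s = MonoidHom.id Gal)
    (i : μ →* G') (p : G' →* G)
    (hi : Function.Injective i) (hp : Function.Surjective p)
    (hcent : ∀ m : μ, i m ∈ Subgroup.center G') (hexact : i.range = p.ker)
    (f : Gal →* G) (hf : Function.Surjective f) :
    ∃ (H : Subgroup G') (s : Gal →* H),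
      Finite H ∧
      Function.Surjective s ∧
      (∀ g : Gal, p ((s g : G')) = f g) ∧
      Function.Surjective (p.comp H.subtype) ∧
      (p.comp H.subtype).ker ≤ Subgroup.center H ∧
      IsCyclic (p.comp H.subtype).ker ∧
      (∃ j : (p.comp H.subtype).ker →* μ, Function.Injective j) ∧
      (∃ lift : H →* G', p.comp lift = p.comp H.subtype) := by
  -- G' is finite
  have hkerfin : Finite p.ker := by
    rw [← hexact]
    exact Set.Finite.to_subtype (Set.finite_range i)
  have hG'fin : Finite G' := by
    have e1 : G' ≃ (G' ⧸ p.ker) × p.ker := Subgroup.groupEquivQuotientProdSubgroup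
    have e2 : (G' ⧸ p.ker) ≃* G := QuotientGroup.quotientKerEquivOfSurjective p hp
    have : Finite (G' ⧸ p.ker) := Finite.of_equiv G e2.symm.toEquiv
    exact Finite.of_equiv _ e1.symm
  -- the pullback extension
  set E : Subgroup (Gal × G') :=
    { carrier := {x | f x.1 = p x.2}
      one_mem' := by simp
      mul_mem' := by
        intro a b ha hb
        simp only [Set.mem_setOf_eq, Prod.fst_mul, Prod.snd_mul, map_mul] at *
        rw [ha, hb]
      inv_mem' := by
        intro a ha
        simp only [Set.mem_setOf_eq, Prod.fst_inv, Prod.snd_inv, map_inv] at *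
        rw [ha] } with hE
  have hmemE : ∀ x : Gal × G', x ∈ E ↔ f x.1 = p x.2 := fun x => Iff.rfl
  have hμE : ∀ m : μ, ((1 : Gal), i m) ∈ E := by
    intro m
    rw [hmemE]
    have : i m ∈ p.ker := hexact ▸ ⟨m, rfl⟩
    rw [map_one]
    exact (MonoidHom.mem_ker.mp this).symm
  let j : μ →* ↥E := ((1 : μ →* Gal).prod i).codRestrict E (fun m => hμE m)
  have hjval : ∀ m : μ, (j m : Gal × G') = ((1 : Gal), i m) := fun m => rfl
  let q : ↥E →* Gal := (MonoidHom.fst Gal G').comp E.subtype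
  have hqval : ∀ x : ↥E, q x = (x : Gal × G').1 := fun x => rfl
  have hjinj : Function.Injective j := by
    intro a b hab
    apply hi
    have h2 := congrArg (fun x : ↥E => (x : Gal × G').2) hab
    simpa [hjval] using h2
  have hqsurj : Function.Surjective q := by
    intro g
    obtain ⟨g', hg'⟩ := hp (f g)
    exact ⟨⟨(g, g'), by rw [hmemE]; exact hg'.symm⟩, rfl⟩
  have hjcent : ∀ m : μ, j m ∈ Subgroup.center ↥E := by
    intro m
    refine Subgroup.mem_center_iff.mpr fun x => Subtype.ext ?_
    rw [Subgroup.coe_mul, Subgroup.coe_mul, hjval]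
    refine Prod.ext ?_ ?_
    · simp
    · exact Subgroup.mem_center_iff.mp (hcent m) (x : Gal × G').2
  have hjq : j.range = q.ker := by
    ext x
    constructor
    · rintro ⟨m, rfl⟩
      exact MonoidHom.mem_ker.mpr rfl
    · intro hx
      have hx1 : (x : Gal × G').1 = 1 := MonoidHom.mem_ker.mp hx
      have hx2 : (x : Gal × G').2 ∈ p.ker := by
        rw [MonoidHom.mem_ker]
        have h := x.2
        rw [hmemE] at h
        rw [← h, hx1, map_one]
      rw [← hexact] at hx2
      obtain ⟨m, hm⟩ := hx2
      exact ⟨m, Subtype.ext (Prod.ext hx1.symm hm)⟩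
  obtain ⟨s₀, hs₀⟩ := hH2 (↥E) j q hjinj hqsurj hjcent hjq
  have hs₀' : ∀ g : Gal, (s₀ g : Gal × G').1 = g := fun g => DFunLike.congr_fun hs₀ g
  let σ : Gal →* G' := (MonoidHom.snd Gal G').comp (E.subtype.comp s₀)
  have hσval : ∀ g : Gal, σ g = (s₀ g : Gal × G').2 := fun g => rfl
  have hpσ : ∀ g : Gal, p (σ g) = f g := by
    intro g
    have hx := (s₀ g).2
    rw [hmemE] at hx
    rw [hσval, ← hx, hs₀' g]
  -- the kernel of p restricted to σ.range maps injectively into μ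
  have hmemK : ∀ x : (p.comp σ.range.subtype).ker,
      (σ.range.subtype.comp (p.comp σ.range.subtype).ker.subtype) x ∈ i.range := by
    intro x
    rw [hexact]
    exact MonoidHom.mem_ker.mpr (MonoidHom.mem_ker.mp x.2)
  let φ : (p.comp σ.range.subtype).ker →* ↥i.range :=
    (σ.range.subtype.comp (p.comp σ.range.subtype).ker.subtype).codRestrict i.range hmemK
  let jK : (p.comp σ.range.subtype).ker →* μ :=
    ((MonoidHom.ofInjective hi).symm : ↥i.range ≃* μ).toMonoidHom.comp φ
  have hφinj : Function.Injective φ := by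
    intro a b hab
    have h2 := congrArg Subtype.val hab
    exact Subtype.ext (Subtype.ext h2)
  have hjKinj : Function.Injective jK :=
    fun a b h => hφinj ((MonoidHom.ofInjective hi).symm.injective h)
  refine ⟨σ.range, σ.rangeRestrict, inferInstance, σ.rangeRestrict_surjective, ?_, ?_, ?_, ?_,
    ⟨jK, hjKinj⟩, ⟨σ.range.subtype, rfl⟩⟩
  · intro g
    exact hpσ g
  · intro g
    obtain ⟨x, hx⟩ := hf g
    exact ⟨⟨σ x, ⟨x, rfl⟩⟩, by rw [MonoidHom.comp_apply, Subgroup.coe_subtype, hpσ x, hx]⟩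
  · -- kernel is central
    intro x hx
    have hmem : (x : G') ∈ p.ker := MonoidHom.mem_ker.mpr (MonoidHom.mem_ker.mp hx)
    rw [← hexact] at hmem
    obtain ⟨m, hm⟩ := hmem
    have hc : (x : G') ∈ Subgroup.center G' := hm ▸ hcent m
    refine Subgroup.mem_center_iff.mpr fun y => Subtype.ext ?_
    rw [Subgroup.coe_mul, Subgroup.coe_mul]
    exact Subgroup.mem_center_iff.mp hc (y : G')
  · -- kernel is cyclic
    have : Finite ((p.comp σ.range.subtype).ker) := inferInstance
    have e2 := MonoidHom.ofInjective hjKinj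
    exact isCyclic_of_surjective e2.symm e2.symm.surjective
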